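/- Let E, F be Banach ideal spaces. Then E ⊙ F is isometrically equal to the 1/2-concavification of the Calderón space E^{1/2}F^{1/2}, that is E ⊙ F ≡ (E^{1/2}F^{1/2})^{(1/2)}; explicitly, ‖z‖_{E⊙F} = inf{max(‖x‖_E², ‖y‖_F²) : |z| = xy, ‖x‖_E = ‖y‖_F, x ∈ E₊, y ∈ F₊}. -/

import Mathlib

open MeasureTheory

/-- A Banach ideal space on a measure space: a linear subspace of measurable
functions (mod null sets) with a complete lattice norm having the ideal property,
and a weak unit (saturation). -/
structure IdealSpace {α : Type*} [MeasurableSpace α] (μ : Measure α) where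
  carrier : Set (α → ℝ)
  norm : (α → ℝ) → ℝ
  zero_mem : (0 : α → ℝ) ∈ carrier
  add_mem : ∀ {f g : α → ℝ}, f ∈ carrier → g ∈ carrier → f + g ∈ carrier
  smul_mem : ∀ (c : ℝ) {f : α → ℝ}, f ∈ carrier → c • f ∈ carrier
  norm_nonneg : ∀ f, 0 ≤ norm f
  norm_eq_zero : ∀ f ∈ carrier, (norm f = 0 ↔ f =ᵐ[μ] 0)
  norm_add : ∀ f g, f ∈ carrier → g ∈ carrier → norm (f + g) ≤ norm f + norm g
  norm_smul : ∀ (c : ℝ) (f : α → ℝ), norm (c • f) = |c| * norm f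
  ideal_mem : ∀ {f g : α → ℝ}, g ∈ carrier → (∀ᵐ a ∂μ, |f a| ≤ |g a|) → f ∈ carrier
  ideal_norm : ∀ {f g : α → ℝ}, g ∈ carrier → (∀ᵐ a ∂μ, |f a| ≤ |g a|) → norm f ≤ norm g
  weak_unit : ∃ w ∈ carrier, ∀ᵐ a ∂μ, 0 < w a
  complete : ∀ x : ℕ → α → ℝ, (∀ n, x n ∈ carrier) →
    (∀ ε > 0, ∃ N, ∀ m ≥ N, ∀ n ≥ N, norm (x m - x n) < ε) →
    ∃ f ∈ carrier, Filter.Tendsto (fun n => norm (x n - f)) Filter.atTop (nhds 0)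

variable {α : Type*} [MeasurableSpace α] {μ : Measure α}

lemma rpow_half_sqrt (x : ℝ) : x ^ ((2:ℝ)⁻¹) = Real.sqrt x := by
  rw [Real.sqrt_eq_rpow, one_div]

lemma sqrt_div_mul {a : ℝ} (b : ℝ) (ha : 0 < a) (hb : 0 ≤ b) :
    Real.sqrt (b / a) * a = Real.sqrt (a * b) := by
  rw [show a * b = b / a * a ^ 2 by field_simp,
    Real.sqrt_mul (div_nonneg hb ha.le), Real.sqrt_sq ha.le]

lemma IdealSpace.norm_zero (E : IdealSpace μ) : E.norm 0 = 0 := by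
  have := E.norm_smul 0 0
  simpa using this

lemma IdealSpace.mem_abs (E : IdealSpace μ) {x : α → ℝ} (hx : x ∈ E.carrier) :
    (fun a => |x a|) ∈ E.carrier :=
  E.ideal_mem hx (Filter.Eventually.of_forall fun a => by simp)

lemma IdealSpace.norm_abs (E : IdealSpace μ) {x : α → ℝ} (hx : x ∈ E.carrier) :
    E.norm (fun a => |x a|) = E.norm x :=
  le_antisymm (E.ideal_norm hx (Filter.Eventually.of_forall fun a => by simp))
    (E.ideal_norm (E.mem_abs hx) (Filter.Eventually.of_forall fun a => by simp))

/-- Sign trick: from `|z| = x*y` with nonneg factors, get `z = x'*y` with `‖x'‖ ≤ ‖x‖`. -/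
lemma sign_factor (E : IdealSpace μ) {z x y : α → ℝ} (hx : x ∈ E.carrier)
    (hx0 : ∀ᵐ a ∂μ, 0 ≤ x a) (hy0 : ∀ᵐ a ∂μ, 0 ≤ y a)
    (hxy : ∀ᵐ a ∂μ, |z a| = x a * y a) :
    ∃ x' ∈ E.carrier, z =ᵐ[μ] x' * y ∧ E.norm x' ≤ E.norm x := by
  refine ⟨fun a => if z a < 0 then -x a else x a, ?_, ?_, ?_⟩
  · exact E.ideal_mem hx (Filter.Eventually.of_forall fun a => by
      by_cases h : z a < 0 <;> simp [h])
  · filter_upwards [hxy] with a ha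
    by_cases h : z a < 0
    · simp only [Pi.mul_apply, if_pos h]
      rw [abs_of_neg h] at ha; linarith
    · simp only [Pi.mul_apply, if_neg h]
      rw [abs_of_nonneg (not_lt.1 h)] at ha; linarith
  · exact E.ideal_norm hx (Filter.Eventually.of_forall fun a => by
      by_cases h : z a < 0 <;> simp [h])

/-- Rebalancing: from `|z| = x*y` nonneg, get an equal-norm factorization with the
same product of norms. -/
lemma balance_factor (E F : IdealSpace μ) {z x y : α → ℝ} (hx : x ∈ E.carrier)
    (hy : y ∈ F.carrier) (hx0 : ∀ᵐ a ∂μ, 0 ≤ x a) (hy0 : ∀ᵐ a ∂μ, 0 ≤ y a)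
    (hxy : ∀ᵐ a ∂μ, |z a| = x a * y a) :
    ∃ x' ∈ E.carrier, ∃ y' ∈ F.carrier, (∀ᵐ a ∂μ, 0 ≤ x' a) ∧ (∀ᵐ a ∂μ, 0 ≤ y' a) ∧
      (∀ᵐ a ∂μ, |z a| = x' a * y' a) ∧ E.norm x' = F.norm y' ∧
      E.norm x' * F.norm y' = E.norm x * F.norm y := by
  rcases eq_or_lt_of_le (E.norm_nonneg x) with hex | hex
  · -- ‖x‖ = 0 : z = 0 a.e., take (0,0)
    have hx0' : x =ᵐ[μ] 0 := (E.norm_eq_zero x hx).1 hex.symm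
    refine ⟨0, E.zero_mem, 0, F.zero_mem, Filter.Eventually.of_forall (fun a => le_refl _),
      Filter.Eventually.of_forall (fun a => le_refl _), ?_, by rw [E.norm_zero, F.norm_zero],
      by rw [E.norm_zero, F.norm_zero, ← hex]; ring⟩
    filter_upwards [hxy, hx0'] with a ha hxa
    simp only [Pi.zero_apply] at hxa ⊢
    rw [ha, hxa]; ring
  rcases eq_or_lt_of_le (F.norm_nonneg y) with hey | hey
  · have hy0' : y =ᵐ[μ] 0 := (F.norm_eq_zero y hy).1 hey.symm
    refine ⟨0, E.zero_mem, 0, F.zero_mem, Filter.Eventually.of_forall (fun a => le_refl _),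
      Filter.Eventually.of_forall (fun a => le_refl _), ?_, by rw [E.norm_zero, F.norm_zero],
      by rw [E.norm_zero, F.norm_zero, ← hey]; ring⟩
    filter_upwards [hxy, hy0'] with a ha hya
    simp only [Pi.zero_apply] at hya ⊢
    rw [ha, hya]; ring
  · -- both norms positive
    set t : ℝ := Real.sqrt (F.norm y / E.norm x) with ht
    have htpos : 0 < t := Real.sqrt_pos.2 (div_pos hey hex)
    have hnx' : E.norm (t • x) = Real.sqrt (E.norm x * F.norm y) := by
      rw [E.norm_smul, abs_of_pos htpos, ht]; exact sqrt_div_mul _ hex hey.le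
    have hny' : F.norm (t⁻¹ • y) = Real.sqrt (E.norm x * F.norm y) := by
      rw [F.norm_smul, abs_of_pos (inv_pos.2 htpos), ht, ← Real.sqrt_inv, inv_div,
        sqrt_div_mul _ hey hex.le, mul_comm]
    refine ⟨t • x, E.smul_mem t hx, t⁻¹ • y, F.smul_mem t⁻¹ hy, ?_, ?_, ?_, ?_, ?_⟩
    · filter_upwards [hx0] with a ha
      exact mul_nonneg htpos.le ha
    · filter_upwards [hy0] with a ha
      exact mul_nonneg (inv_pos.2 htpos).le ha
    · filter_upwards [hxy] with a ha
      simp only [Pi.smul_apply, smul_eq_mul]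
      rw [ha]; field_simp
    · rw [hnx', hny']
    · rw [hnx', hny', Real.mul_self_sqrt (mul_nonneg hex.le hey.le)]

/-- Division trick: from `|z| ≤ x*y` nonneg, get `y''` with `|z| = x*y''`, `‖y''‖ ≤ ‖y‖`. -/
lemma div_factor (F : IdealSpace μ) {z x y : α → ℝ} (hy : y ∈ F.carrier)
    (hx0 : ∀ᵐ a ∂μ, 0 ≤ x a) (hy0 : ∀ᵐ a ∂μ, 0 ≤ y a)
    (hle : ∀ᵐ a ∂μ, |z a| ≤ x a * y a) :
    ∃ y'' ∈ F.carrier, (∀ᵐ a ∂μ, 0 ≤ y'' a) ∧ (∀ᵐ a ∂μ, |z a| = x a * y'' a) ∧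
      F.norm y'' ≤ F.norm y := by
  set y'' : α → ℝ := fun a => if x a = 0 then 0 else |z a| / x a with hy''
  have hdom : ∀ᵐ a ∂μ, |y'' a| ≤ |y a| := by
    filter_upwards [hx0, hy0, hle] with a hxa hya ha
    by_cases h : x a = 0
    · simp [hy'', h, abs_nonneg]
    · have hxpos : 0 < x a := lt_of_le_of_ne hxa (Ne.symm h)
      have : |z a| / x a ≤ y a := (div_le_iff₀ hxpos).2 (by linarith [ha])
      have h0 : 0 ≤ |z a| / x a := div_nonneg (abs_nonneg _) hxa
      simp only [hy'', if_neg h]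
      rw [abs_of_nonneg h0, abs_of_nonneg hya]
      exact this
  refine ⟨y'', F.ideal_mem hy hdom, ?_, ?_, F.ideal_norm hy hdom⟩
  · filter_upwards [hx0] with a hxa
    by_cases h : x a = 0
    · simp [hy'', h]
    · simp only [hy'', if_neg h]
      exact div_nonneg (abs_nonneg _) hxa
  · filter_upwards [hx0, hy0, hle] with a hxa hya ha
    by_cases h : x a = 0
    · simp only [hy'', if_pos h, mul_zero]
      rw [h, zero_mul] at ha
      exact le_antisymm ha (abs_nonneg _)
    · simp only [hy'', if_neg h]
      field_simp

/-- From the Calderón inequality for √|z| we get `|z| ≤ x*y` a.e. -/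
lemma cald_le {z x y : α → ℝ} (hx0 : ∀ᵐ a ∂μ, 0 ≤ x a) (hy0 : ∀ᵐ a ∂μ, 0 ≤ y a)
    (h : ∀ᵐ a ∂μ, Real.sqrt |z a| ≤ x a ^ ((2:ℝ)⁻¹) * y a ^ ((2:ℝ)⁻¹)) :
    ∀ᵐ a ∂μ, |z a| ≤ x a * y a := by
  filter_upwards [hx0, hy0, h] with a hxa hya ha
  rw [rpow_half_sqrt, rpow_half_sqrt, ← Real.sqrt_mul hxa] at ha
  calc |z a| = Real.sqrt |z a| * Real.sqrt |z a| := (Real.mul_self_sqrt (abs_nonneg _)).symm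
    _ ≤ Real.sqrt (x a * y a) * Real.sqrt (x a * y a) :=
        mul_le_mul ha ha (Real.sqrt_nonneg _) (Real.sqrt_nonneg _)
    _ = x a * y a := Real.mul_self_sqrt (mul_nonneg hxa hya)

/-- The pointwise product space E ⊙ F. -/
def prodSet (E F : IdealSpace μ) : Set (α → ℝ) :=
  {z | ∃ x ∈ E.carrier, ∃ y ∈ F.carrier, z =ᵐ[μ] x * y}

/-- The quasi-norm of the pointwise product space E ⊙ F. -/
noncomputable def prodNorm (E F : IdealSpace μ) (z : α → ℝ) : ℝ :=
  sInf {r | ∃ x ∈ E.carrier, ∃ y ∈ F.carrier, z =ᵐ[μ] x * y ∧ r = E.norm x * F.norm y}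

/-- The Calderón space E^{1/2}F^{1/2}: membership. -/
def caldHalfSet (E F : IdealSpace μ) : Set (α → ℝ) :=
  {w | ∃ x ∈ E.carrier, ∃ y ∈ F.carrier, (∀ᵐ a ∂μ, 0 ≤ x a) ∧ (∀ᵐ a ∂μ, 0 ≤ y a) ∧
      ∀ᵐ a ∂μ, |w a| ≤ x a ^ ((2 : ℝ)⁻¹) * y a ^ ((2 : ℝ)⁻¹)}

/-- The Calderón space norm ‖w‖ = inf{max(‖x‖_E,‖y‖_F) : |w| ≤ x^{1/2}y^{1/2}, x,y ≥ 0}. -/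
noncomputable def caldHalfNorm (E F : IdealSpace μ) (w : α → ℝ) : ℝ :=
  sInf {r | ∃ x ∈ E.carrier, ∃ y ∈ F.carrier, (∀ᵐ a ∂μ, 0 ≤ x a) ∧ (∀ᵐ a ∂μ, 0 ≤ y a) ∧
      (∀ᵐ a ∂μ, |w a| ≤ x a ^ ((2 : ℝ)⁻¹) * y a ^ ((2 : ℝ)⁻¹)) ∧
      r = max (E.norm x) (F.norm y)}

/-- Theorem 1(iv): E ⊙ F ≡ (E^{1/2}F^{1/2})^{(1/2)}: membership coincides,
‖z‖_{E⊙F} = (‖|z|^{1/2}‖_{E^{1/2}F^{1/2}})², and the explicit equal-norm formula holds. -/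
theorem product_eq_half_concavification (E F : IdealSpace μ) (z : α → ℝ) :
    (z ∈ prodSet E F ↔ (fun a => Real.sqrt |z a|) ∈ caldHalfSet E F) ∧
    prodNorm E F z = caldHalfNorm E F (fun a => Real.sqrt |z a|) ^ 2 ∧
    prodNorm E F z =
      sInf {r | ∃ x ∈ E.carrier, ∃ y ∈ F.carrier, (∀ᵐ a ∂μ, 0 ≤ x a) ∧ (∀ᵐ a ∂μ, 0 ≤ y a) ∧
        (∀ᵐ a ∂μ, |z a| = x a * y a) ∧ E.norm x = F.norm y ∧
        r = max (E.norm x ^ 2) (F.norm y ^ 2)} := by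
  classical
  set A : Set ℝ :=
    {r | ∃ x ∈ E.carrier, ∃ y ∈ F.carrier, z =ᵐ[μ] x * y ∧ r = E.norm x * F.norm y} with hAdef
  set B : Set ℝ :=
    {r | ∃ x ∈ E.carrier, ∃ y ∈ F.carrier, (∀ᵐ a ∂μ, 0 ≤ x a) ∧ (∀ᵐ a ∂μ, 0 ≤ y a) ∧
      (∀ᵐ a ∂μ, abs (Real.sqrt |z a|) ≤ x a ^ ((2 : ℝ)⁻¹) * y a ^ ((2 : ℝ)⁻¹)) ∧
      r = max (E.norm x) (F.norm y)} with hBdef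
  set C : Set ℝ :=
    {r | ∃ x ∈ E.carrier, ∃ y ∈ F.carrier, (∀ᵐ a ∂μ, 0 ≤ x a) ∧ (∀ᵐ a ∂μ, 0 ≤ y a) ∧
      (∀ᵐ a ∂μ, |z a| = x a * y a) ∧ E.norm x = F.norm y ∧
      r = max (E.norm x ^ 2) (F.norm y ^ 2)} with hCdef
  have hPA : prodNorm E F z = sInf A := rfl
  have hPB : caldHalfNorm E F (fun a => Real.sqrt |z a|) = sInf B := rfl
  have hPC : sInf {r | ∃ x ∈ E.carrier, ∃ y ∈ F.carrier, (∀ᵐ a ∂μ, 0 ≤ x a) ∧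
      (∀ᵐ a ∂μ, 0 ≤ y a) ∧ (∀ᵐ a ∂μ, |z a| = x a * y a) ∧ E.norm x = F.norm y ∧
      r = max (E.norm x ^ 2) (F.norm y ^ 2)} = sInf C := rfl
  -- element nonnegativity and lower bounds
  have hA0 : ∀ r ∈ A, (0:ℝ) ≤ r := by
    rintro r ⟨x, hx, y, hy, -, rfl⟩
    exact mul_nonneg (E.norm_nonneg x) (F.norm_nonneg y)
  have hB0 : ∀ r ∈ B, (0:ℝ) ≤ r := by
    rintro r ⟨x, hx, y, hy, -, -, -, rfl⟩
    exact le_trans (E.norm_nonneg x) (le_max_left _ _)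
  have hC0 : ∀ r ∈ C, (0:ℝ) ≤ r := by
    rintro r ⟨x, hx, y, hy, -, -, -, -, rfl⟩
    exact le_trans (sq_nonneg (E.norm x)) (le_max_left _ _)
  have bddA : BddBelow A := ⟨0, fun r hr => hA0 r hr⟩
  have bddB : BddBelow B := ⟨0, fun r hr => hB0 r hr⟩
  have bddC : BddBelow C := ⟨0, fun r hr => hC0 r hr⟩
  -- transfer: from A to B and C (with equality of values)
  have hAtoBC : ∀ r ∈ A, ∃ b ∈ B, ∃ c ∈ C, b ^ 2 ≤ r ∧ c ≤ r := by
    rintro r ⟨x, hx, y, hy, hzxy, rfl⟩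
    have habs : ∀ᵐ a ∂μ, |z a| = |x a| * |y a| := by
      filter_upwards [hzxy] with a ha
      rw [ha, Pi.mul_apply, abs_mul]
    obtain ⟨x', hx', y', hy', hx'0, hy'0, heq, hnorms, hprod⟩ :=
      balance_factor E F (E.mem_abs hx) (F.mem_abs hy)
        (Filter.Eventually.of_forall fun a => abs_nonneg _)
        (Filter.Eventually.of_forall fun a => abs_nonneg _) habs
    rw [E.norm_abs hx, F.norm_abs hy] at hprod
    have hcald : ∀ᵐ a ∂μ, abs (Real.sqrt |z a|) ≤ x' a ^ ((2:ℝ)⁻¹) * y' a ^ ((2:ℝ)⁻¹) := by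
      filter_upwards [heq, hx'0, hy'0] with a ha hxa hya
      rw [rpow_half_sqrt, rpow_half_sqrt, abs_of_nonneg (Real.sqrt_nonneg _), ha,
        Real.sqrt_mul hxa]
    have hsq : max (E.norm x') (F.norm y') ^ 2 = E.norm x * F.norm y := by
      rw [← hnorms, max_self, sq]
      calc E.norm x' * E.norm x' = E.norm x' * F.norm y' := by rw [hnorms]
        _ = E.norm x * F.norm y := hprod
    refine ⟨max (E.norm x') (F.norm y'), ⟨x', hx', y', hy', hx'0, hy'0, hcald, rfl⟩,
      max (E.norm x' ^ 2) (F.norm y' ^ 2), ⟨x', hx', y', hy', hx'0, hy'0, heq, hnorms, rfl⟩,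
      le_of_eq hsq, le_of_eq ?_⟩
    rw [← hnorms, max_self, sq]
    calc E.norm x' * E.norm x' = E.norm x' * F.norm y' := by rw [hnorms]
      _ = E.norm x * F.norm y := hprod
  -- transfer: from B to C
  have hBtoC : ∀ b ∈ B, ∃ c ∈ C, c ≤ b ^ 2 := by
    rintro b ⟨x, hx, y, hy, hx0, hy0, hle, rfl⟩
    have hle' : ∀ᵐ a ∂μ, Real.sqrt |z a| ≤ x a ^ ((2:ℝ)⁻¹) * y a ^ ((2:ℝ)⁻¹) := by
      filter_upwards [hle] with a ha
      rwa [abs_of_nonneg (Real.sqrt_nonneg _)] at ha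
    have hzle := cald_le hx0 hy0 hle'
    obtain ⟨y'', hy'', hy''0, heq, hny''⟩ := div_factor F hy hx0 hy0 hzle
    obtain ⟨x', hx', y', hy', hx'0, hy'0, heq', hnorms, hprod⟩ :=
      balance_factor E F hx hy'' hx0 hy''0 heq
    refine ⟨max (E.norm x' ^ 2) (F.norm y' ^ 2),
      ⟨x', hx', y', hy', hx'0, hy'0, heq', hnorms, rfl⟩, ?_⟩
    have h1 : max (E.norm x' ^ 2) (F.norm y' ^ 2) = E.norm x' * F.norm y' := by
      rw [← hnorms, max_self, sq, hnorms]
    rw [h1, hprod]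
    have hxb : E.norm x ≤ max (E.norm x) (F.norm y) := le_max_left _ _
    have hyb : F.norm y'' ≤ max (E.norm x) (F.norm y) :=
      le_trans hny'' (le_max_right _ _)
    have hb0 : (0:ℝ) ≤ max (E.norm x) (F.norm y) :=
      le_trans (E.norm_nonneg x) (le_max_left _ _)
    calc E.norm x * F.norm y'' ≤ max (E.norm x) (F.norm y) * max (E.norm x) (F.norm y) :=
          mul_le_mul hxb hyb (F.norm_nonneg _) hb0
      _ = max (E.norm x) (F.norm y) ^ 2 := (sq _).symm
  -- transfer: from C to A
  have hCtoA : ∀ c ∈ C, ∃ r ∈ A, r ≤ c := by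
    rintro c ⟨x, hx, y, hy, hx0, hy0, heq, hnn, rfl⟩
    obtain ⟨x', hx', hz', hnx'⟩ := sign_factor E hx hx0 hy0 heq
    refine ⟨E.norm x' * F.norm y, ⟨x', hx', y, hy, hz', rfl⟩, ?_⟩
    calc E.norm x' * F.norm y ≤ E.norm x * F.norm y :=
          mul_le_mul_of_nonneg_right hnx' (F.norm_nonneg y)
      _ = E.norm x ^ 2 := by rw [sq, hnn]
      _ ≤ max (E.norm x ^ 2) (F.norm y ^ 2) := le_max_left _ _
  -- membership equivalence
  have hmem : z ∈ prodSet E F ↔ (fun a => Real.sqrt |z a|) ∈ caldHalfSet E F := by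
    constructor
    · rintro ⟨x, hx, y, hy, hzxy⟩
      refine ⟨fun a => |x a|, E.mem_abs hx, fun a => |y a|, F.mem_abs hy,
        Filter.Eventually.of_forall fun a => abs_nonneg _,
        Filter.Eventually.of_forall fun a => abs_nonneg _, ?_⟩
      filter_upwards [hzxy] with a ha
      rw [rpow_half_sqrt, rpow_half_sqrt, abs_of_nonneg (Real.sqrt_nonneg _),
        show |z a| = |x a| * |y a| by rw [ha, Pi.mul_apply, abs_mul],
        Real.sqrt_mul (abs_nonneg _)]
    · rintro ⟨x, hx, y, hy, hx0, hy0, hle⟩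
      have hle' : ∀ᵐ a ∂μ, Real.sqrt |z a| ≤ x a ^ ((2:ℝ)⁻¹) * y a ^ ((2:ℝ)⁻¹) := by
        filter_upwards [hle] with a ha
        simpa [abs_of_nonneg (Real.sqrt_nonneg _)] using ha
      have hzle := cald_le hx0 hy0 hle'
      obtain ⟨y'', hy'', hy''0, heq, -⟩ := div_factor F hy hx0 hy0 hzle
      obtain ⟨x', hx', hz', -⟩ := sign_factor E hx hx0 hy''0 heq
      exact ⟨x', hx', y'', hy'', hz'⟩
  refine ⟨hmem, ?_⟩
  rw [hPA, hPB, hPC]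
  by_cases hz : z ∈ prodSet E F
  · -- nonempty case
    have hAne : A.Nonempty := by
      obtain ⟨x, hx, y, hy, hzxy⟩ := hz
      exact ⟨E.norm x * F.norm y, x, hx, y, hy, hzxy, rfl⟩
    have hAne' := hAne
    obtain ⟨r0, hr0A⟩ := hAne'
    obtain ⟨b0, hb0B, c0, hc0C, -, -⟩ := hAtoBC r0 hr0A
    have hBne : B.Nonempty := ⟨b0, hb0B⟩
    have hCne : C.Nonempty := ⟨c0, hc0C⟩
    have h0B : (0:ℝ) ≤ sInf B := le_csInf hBne hB0
    have h0C : (0:ℝ) ≤ sInf C := le_csInf hCne hC0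
    have h1 : sInf B ^ 2 ≤ sInf A := by
      refine le_csInf hAne fun r hr => ?_
      obtain ⟨b, hb, c, hc, hb2, -⟩ := hAtoBC r hr
      exact le_trans (pow_le_pow_left₀ h0B (csInf_le bddB hb) 2) hb2
    have h2 : sInf C ≤ sInf B ^ 2 := by
      have hlb : Real.sqrt (sInf C) ≤ sInf B := by
        refine le_csInf hBne fun b hb => ?_
        obtain ⟨c, hc, hcb⟩ := hBtoC b hb
        calc Real.sqrt (sInf C) ≤ Real.sqrt (b ^ 2) :=
              Real.sqrt_le_sqrt (le_trans (csInf_le bddC hc) hcb)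
          _ = b := Real.sqrt_sq (hB0 b hb)
      calc sInf C = Real.sqrt (sInf C) ^ 2 := (Real.sq_sqrt h0C).symm
        _ ≤ sInf B ^ 2 := pow_le_pow_left₀ (Real.sqrt_nonneg _) hlb 2
    have h3 : sInf A ≤ sInf C := by
      refine le_csInf hCne fun c hc => ?_
      obtain ⟨r, hr, hrc⟩ := hCtoA c hc
      exact le_trans (csInf_le bddA hr) hrc
    exact ⟨le_antisymm (h3.trans h2) h1, le_antisymm h3 (h2.trans h1)⟩
  · -- empty case: all three sets are empty
    have hAe : A = ∅ := by
      rw [Set.eq_empty_iff_forall_notMem]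
      rintro r ⟨x, hx, y, hy, hzxy, -⟩
      exact hz ⟨x, hx, y, hy, hzxy⟩
    have hBe : B = ∅ := by
      rw [Set.eq_empty_iff_forall_notMem]
      rintro b ⟨x, hx, y, hy, hx0, hy0, hle, -⟩
      exact hz (hmem.mpr ⟨x, hx, y, hy, hx0, hy0, hle⟩)
    have hCe : C = ∅ := by
      rw [Set.eq_empty_iff_forall_notMem]
      rintro c hc
      obtain ⟨r, hr, -⟩ := hCtoA c hc
      obtain ⟨x, hx, y, hy, hzxy, -⟩ := hr
      exact hz ⟨x, hx, y, hy, hzxy⟩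
    rw [hAe, hBe, hCe, Real.sInf_empty]
    norm_num
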